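/- Let h : ℝⁿ → ℝ be continuously differentiable, let f : ℝⁿ → ℝⁿ be continuous, and suppose the admissible set C = {x ∈ ℝⁿ : h(x) ≥ 0} is nonempty and compact. If ⟨∇h(x), f(x)⟩ > 0 for every x with h(x) = 0 (the boundary of C), then for each integer k ≥ 1 there exists a constant γ > 0 such that ⟨∇h(x), f(x)⟩ ≥ −γ·h(x)^k for all x with h(x) > 0 (the interior of C). -/

import Mathlib

open RealInnerProductSpace

/-- Lemma 1 of the paper: Let h be C¹, f continuous, and suppose the
admissible set C = {x : h(x) ≥ 0} is nonempty and compact. If ⟨∇h(x), f(x)⟩ > 0 on the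
boundary {h = 0}, then for each k ≥ 1 there is γ > 0 with
⟨∇h(x), f(x)⟩ ≥ −γ·h(x)^k on the interior {h > 0}. -/
theorem zbf_gain_existence (n : ℕ)
    (h : EuclideanSpace ℝ (Fin n) → ℝ) (hh : ContDiff ℝ 1 h)
    (f : EuclideanSpace ℝ (Fin n) → EuclideanSpace ℝ (Fin n)) (hf : Continuous f)
    (hne : {x : EuclideanSpace ℝ (Fin n) | 0 ≤ h x}.Nonempty)
    (hcpt : IsCompact {x : EuclideanSpace ℝ (Fin n) | 0 ≤ h x})
    (hbdry : ∀ x : EuclideanSpace ℝ (Fin n), h x = 0 → 0 < ⟪gradient h x, f x⟫) :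
    ∀ k : ℕ, 1 ≤ k → ∃ γ : ℝ, 0 < γ ∧
      ∀ x : EuclideanSpace ℝ (Fin n), 0 < h x →
        ⟪gradient h x, f x⟫ ≥ -γ * (h x) ^ k := by
  intro k hk
  set g : EuclideanSpace ℝ (Fin n) → ℝ := fun x => ⟪gradient h x, f x⟫ with hg
  have hgrad_cont : Continuous fun x => gradient h x := by
    have : Continuous fun x => fderiv ℝ h x := hh.continuous_fderiv one_ne_zero
    exact (InnerProductSpace.toDual ℝ (EuclideanSpace ℝ (Fin n))).symm.continuous.comp this
  have hgcont : Continuous g := hgrad_cont.inner hf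
  have hhcont : Continuous h := hh.continuous
  set K : Set (EuclideanSpace ℝ (Fin n)) := {x | 0 ≤ h x} ∩ {x | g x ≤ 0} with hK
  have hKcpt : IsCompact K :=
    hcpt.inter_right (isClosed_le hgcont continuous_const)
  rcases K.eq_empty_or_nonempty with hKe | hKne
  · refine ⟨1, one_pos, fun x hx => ?_⟩
    have hxK : x ∉ K := hKe ▸ Set.notMem_empty x
    have : 0 < g x := by
      by_contra hc
      exact hxK ⟨le_of_lt hx, not_lt.mp hc⟩
    have : (0:ℝ) ≤ g x := this.le
    nlinarith [pow_pos hx k]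
  · obtain ⟨a, haK, ham⟩ := hKcpt.exists_isMinOn hKne (hhcont.continuousOn)
    obtain ⟨b, hbK, hbm⟩ := hKcpt.exists_isMinOn hKne (hgcont.continuousOn)
    have ha0 : (0:ℝ) ≤ h a := haK.1
    have hgb : g b ≤ 0 := hbK.2
    have hma : 0 < h a := by
      rcases lt_or_eq_of_le ha0 with hlt | heq
      · exact hlt
      · exact absurd (hbdry a heq.symm) (not_lt.mpr haK.2)
    have hγpos : 0 < (1 - g b) / (h a) ^ k :=
      div_pos (by linarith) (pow_pos hma k)
    refine ⟨(1 - g b) / (h a) ^ k, hγpos, fun x hx => ?_⟩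
    rcases le_or_gt (g x) 0 with hgx | hgx
    · have hxK : x ∈ K := ⟨hx.le, hgx⟩
      have h1 : h a ≤ h x := ham hxK
      have h2 : g b ≤ g x := hbm hxK
      have hpow : (h a) ^ k ≤ (h x) ^ k := pow_le_pow_left₀ hma.le h1 k
      have hc : (1 - g b) / (h a) ^ k * (h a) ^ k = 1 - g b :=
        div_mul_cancel₀ _ (pow_pos hma k).ne'
      have := mul_le_mul_of_nonneg_left hpow hγpos.le
      show -((1 - g b) / (h a) ^ k) * (h x) ^ k ≤ g x
      nlinarith
    · have : -((1 - g b) / (h a) ^ k) * (h x) ^ k ≤ 0 := by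
        have hgb : g b ≤ 0 := hbK.2
        have : (0:ℝ) ≤ (1 - g b) / (h a) ^ k := by positivity
        nlinarith [pow_pos hx k]
      calc -((1 - g b) / (h a) ^ k) * (h x) ^ k ≤ 0 := this
        _ ≤ g x := hgx.le
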